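/- Let G = GL(3, 𝔽₂) act on the set X of 1-dimensional linear subspaces of 𝔽₂³ and on the set Y of 2-dimensional linear subspaces of 𝔽₂³, in each case by taking images under the linear map. Then there is no map f : X → Y satisfying f(g·W) = g·f(W) for all g ∈ G and all W ∈ X; in particular the two actions are not isomorphic as G-sets. -/

import Mathlib

abbrev V2 : Type := Fin 3 → ZMod 2

/-- An element of `GL(3, 𝔽₂)` as a linear automorphism of `𝔽₂³`. -/
noncomputable def glLinearEquiv (g : GL (Fin 3) (ZMod 2)) : V2 ≃ₗ[ZMod 2] V2 :=
  LinearMap.GeneralLinearGroup.generalLinearEquiv (ZMod 2) V2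
    (Matrix.GeneralLinearGroup.toLin g)

lemma glLinearEquiv_one (x : V2) : glLinearEquiv 1 x = x := by
  simp [glLinearEquiv]

lemma glLinearEquiv_mul (g h : GL (Fin 3) (ZMod 2)) (x : V2) :
    glLinearEquiv (g * h) x = glLinearEquiv g (glLinearEquiv h x) := by
  have : glLinearEquiv (g * h) = glLinearEquiv g * glLinearEquiv h := by
    simp [glLinearEquiv, map_mul]
  rw [this]
  rfl

/-- The action of `GL(3, 𝔽₂)` on the set of all linear subspaces of `𝔽₂³`,
by taking images under the linear map. -/
noncomputable def subAct : GL (Fin 3) (ZMod 2) →* Equiv.Perm (Submodule (ZMod 2) V2) where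
  toFun g := (Submodule.orderIsoMapComap (glLinearEquiv g)).toEquiv
  map_one' := by
    ext W
    simp [Submodule.orderIsoMapComap, glLinearEquiv_one]
    have h1 : glLinearEquiv 1 = LinearEquiv.refl (ZMod 2) V2 := LinearEquiv.ext glLinearEquiv_one
    simp [h1]
  map_mul' g h := by
    ext W
    simp [Submodule.orderIsoMapComap, glLinearEquiv_mul]
    have h2 : glLinearEquiv (g * h) = (glLinearEquiv h).trans (glLinearEquiv g) :=
      LinearEquiv.ext (glLinearEquiv_mul g h)
    simp [h2]

lemma subAct_finrank (g : GL (Fin 3) (ZMod 2)) (W : Submodule (ZMod 2) V2) :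
    Module.finrank (ZMod 2) (subAct g W) = Module.finrank (ZMod 2) W := by
  have h : subAct g W = W.map ((glLinearEquiv g) : V2 →ₗ[ZMod 2] V2) := by
    ext x
    simp only [subAct, Submodule.orderIsoMapComap, MonoidHom.coe_mk, OneHom.coe_mk,
      RelIso.coe_fn_toEquiv, Submodule.mem_map, LinearEquiv.coe_coe]
    rfl
  rw [h, LinearEquiv.finrank_map_eq]

/-- The action of `GL(3, 𝔽₂)` on the set of `r`-dimensional linear subspaces of `𝔽₂³`,
by taking images under the linear map. -/
noncomputable def fanoRep (r : ℕ) :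
    GL (Fin 3) (ZMod 2) →*
      Equiv.Perm {W : Submodule (ZMod 2) V2 // Module.finrank (ZMod 2) W = r} where
  toFun g := (subAct g).subtypePerm (fun W => by rw [subAct_finrank])
  map_one' := by
    ext W
    simp [Equiv.Perm.subtypePerm_apply]
  map_mul' g h := by
    ext W
    simp [Equiv.Perm.subtypePerm_apply]
    exact Iff.rfl


def Mg : Matrix (Fin 3) (Fin 3) (ZMod 2) := !![1,1,0;0,1,0;0,0,1]
def Mk : Matrix (Fin 3) (Fin 3) (ZMod 2) := !![1,0,0;0,0,1;0,1,1]
def Mkinv : Matrix (Fin 3) (Fin 3) (ZMod 2) := !![1,0,0;0,1,1;0,1,0]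
def gG : GL (Fin 3) (ZMod 2) := ⟨Mg, Mg, by decide, by decide⟩
def kG : GL (Fin 3) (ZMod 2) := ⟨Mk, Mkinv, by decide, by decide⟩

lemma vec_eta (v : V2) : v = ![v 0, v 1, v 2] := by
  funext i; fin_cases i <;> rfl

lemma key (U : Submodule (ZMod 2) V2)
    (hg : ∀ x ∈ U, Mg.mulVec x ∈ U) (hk : ∀ x ∈ U, Mk.mulVec x ∈ U)
    (h2 : Module.finrank (ZMod 2) U = 2) : False := by
  set e1 : V2 := ![1,0,0] with he1
  set e2 : V2 := ![0,1,0] with he2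
  set e3 : V2 := ![0,0,1] with he3
  -- U ≠ ⊥
  have hUbot : U ≠ ⊥ := by
    intro h; rw [h] at h2; simp at h2
  obtain ⟨v, hv, hv0⟩ := Submodule.ne_bot_iff U |>.mp hUbot
  -- step 1 : e1 ∈ U
  have hvb : ![v 1, 0, 0] ∈ U := by
    have h1 : Mg.mulVec v + v ∈ U := U.add_mem (hg v hv) hv
    have e : Mg.mulVec v + v = ![v 1, 0, 0] := by
      rw [vec_eta v]
      exact (by decide : ∀ a b c : ZMod 2, Mg.mulVec ![a,b,c] + ![a,b,c] = ![b,0,0]) _ _ _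
    rwa [e] at h1
  have hvc : ![v 2, 0, 0] ∈ U := by
    have h1 : Mg.mulVec (Mk.mulVec v) + Mk.mulVec v ∈ U :=
      U.add_mem (hg _ (hk v hv)) (hk v hv)
    have e : Mg.mulVec (Mk.mulVec v) + Mk.mulVec v = ![v 2, 0, 0] := by
      rw [vec_eta v]
      exact (by decide :
        ∀ a b c : ZMod 2, Mg.mulVec (Mk.mulVec ![a,b,c]) + Mk.mulVec ![a,b,c] = ![c,0,0]) _ _ _
    rwa [e] at h1
  have hne : ¬ (v 0 = 0 ∧ v 1 = 0 ∧ v 2 = 0) := by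
    rintro ⟨h0, h1d, h2d⟩
    apply hv0
    funext i; fin_cases i <;> simpa
  have he1U : e1 ∈ U := by
    have tri : (![1,0,0] : V2) = ![v 1,0,0] ∨ (![1,0,0] : V2) = ![v 2,0,0] ∨
        (![1,0,0] : V2) = ![v 0, v 1, v 2] := by
      revert hne
      exact (by decide : ∀ a b c : ZMod 2, ¬(a=0∧b=0∧c=0) →
        ((![1,0,0] : V2) = ![b,0,0] ∨ (![1,0,0] : V2) = ![c,0,0] ∨
         (![1,0,0] : V2) = ![a,b,c])) (v 0) (v 1) (v 2)
    rcases tri with h | h | h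
    · rw [he1, h]; exact hvb
    · rw [he1, h]; exact hvc
    · rw [he1, h, ← vec_eta v]; exact hv
  -- step 2 : get w ∈ U not in span {e1}
  have hnle : ¬ U ≤ Submodule.span (ZMod 2) {e1} := by
    intro hle
    have h1 : Module.finrank (ZMod 2) (Submodule.span (ZMod 2) {e1}) = 1 :=
      finrank_span_singleton (by decide : e1 ≠ 0)
    have := Submodule.finrank_mono hle
    omega
  obtain ⟨w, hw, hwns⟩ := SetLike.not_le_iff_exists.mp hnle
  have hw' : ![0, w 1, w 2] ∈ U := by
    have h1 : w + (w 0) • e1 ∈ U := U.add_mem hw (U.smul_mem _ he1U)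
    have e : w + (w 0) • e1 = ![0, w 1, w 2] := by
      rw [vec_eta w, he1]
      exact (by decide : ∀ a b c : ZMod 2,
        (![a,b,c] : V2) + a • ![1,0,0] = ![0,b,c]) _ _ _
    rwa [e] at h1
  have hwne : ¬ (w 1 = 0 ∧ w 2 = 0) := by
    rintro ⟨h1, h2d⟩
    apply hwns
    rw [Submodule.mem_span_singleton]
    refine ⟨w 0, ?_⟩
    rw [vec_eta w, h1, h2d, he1]
    exact ((by decide : ∀ a : ZMod 2, a • (![1,0,0] : V2) = ![a,0,0]) (w 0)).symm ▸ rfl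
  -- step 3 : e2, e3 ∈ U
  have hu1 : ![0, w 1, w 2] ∈ U := hw'
  have hu2 : ![(0:ZMod 2), w 2, w 1 + w 2] ∈ U := by
    have := hk _ hu1
    have e : Mk.mulVec ![0, w 1, w 2] = ![(0:ZMod 2), w 2, w 1 + w 2] :=
      (by decide : ∀ b c : ZMod 2, Mk.mulVec ![0,b,c] = ![0,c,b+c]) _ _
    rwa [e] at this
  have hu3 : ![(0:ZMod 2), w 1 + w 2, w 1] ∈ U := by
    have := hk _ hu2
    have e : Mk.mulVec ![(0:ZMod 2), w 2, w 1 + w 2] = ![(0:ZMod 2), w 1 + w 2, w 1] :=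
      (by decide : ∀ b c : ZMod 2, Mk.mulVec ![0,c,b+c] = ![0,b+c,b]) _ _
    rwa [e] at this
  have he2U : e2 ∈ U := by
    have tri := (by decide : ∀ b c : ZMod 2, ¬(b=0∧c=0) →
      ((![0,1,0] : V2) = ![0,b,c] ∨ (![0,1,0] : V2) = ![0,c,b+c] ∨
       (![0,1,0] : V2) = ![0,b+c,b])) (w 1) (w 2) hwne
    rcases tri with h | h | h <;> rw [he2, h] <;> assumption
  have he3U : e3 ∈ U := by
    have tri := (by decide : ∀ b c : ZMod 2, ¬(b=0∧c=0) →
      ((![0,0,1] : V2) = ![0,b,c] ∨ (![0,0,1] : V2) = ![0,c,b+c] ∨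
       (![0,0,1] : V2) = ![0,b+c,b])) (w 1) (w 2) hwne
    rcases tri with h | h | h <;> rw [he3, h] <;> assumption
  -- step 4 : U = ⊤
  have hT : U = ⊤ := by
    rw [Submodule.eq_top_iff']
    intro x
    have e : x = x 0 • e1 + x 1 • e2 + x 2 • e3 := by
      rw [vec_eta x, he1, he2, he3]
      exact ((by decide : ∀ a b c : ZMod 2,
        (![a,b,c] : V2) = a • ![1,0,0] + b • ![0,1,0] + c • ![0,0,1]) _ _ _)
    rw [e]
    exact U.add_mem (U.add_mem (U.smul_mem _ he1U) (U.smul_mem _ he2U)) (U.smul_mem _ he3U)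
  rw [hT] at h2
  rw [finrank_top] at h2
  simp [Module.finrank_fin_fun] at h2

lemma subAct_eq_map (g : GL (Fin 3) (ZMod 2)) (W : Submodule (ZMod 2) V2) :
    subAct g W = W.map ((glLinearEquiv g) : V2 →ₗ[ZMod 2] V2) := by
  ext x
  simp only [subAct, Submodule.orderIsoMapComap, MonoidHom.coe_mk, OneHom.coe_mk,
    RelIso.coe_fn_toEquiv, Submodule.mem_map, LinearEquiv.coe_coe]
  rfl

lemma glLinearEquiv_apply (g : GL (Fin 3) (ZMod 2)) (x : V2) :
    glLinearEquiv g x = (g : Matrix (Fin 3) (Fin 3) (ZMod 2)).mulVec x := rfl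

lemma fixes_point (g : GL (Fin 3) (ZMod 2))
    (h : (g : Matrix (Fin 3) (Fin 3) (ZMod 2)).mulVec ![1,0,0] = ![1,0,0]) :
    subAct g (Submodule.span (ZMod 2) {(![1,0,0] : V2)}) =
      Submodule.span (ZMod 2) {(![1,0,0] : V2)} := by
  simp only [subAct_eq_map, Submodule.map_span, Set.image_singleton,
    LinearEquiv.coe_coe, glLinearEquiv_apply, h]

lemma forward_closed (g : GL (Fin 3) (ZMod 2)) (U : Submodule (ZMod 2) V2)
    (h : subAct g U = U) :
    ∀ x ∈ U, (g : Matrix (Fin 3) (Fin 3) (ZMod 2)).mulVec x ∈ U := by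
  intro x hx
  have : glLinearEquiv g x ∈ U.map ((glLinearEquiv g) : V2 →ₗ[ZMod 2] V2) :=
    Submodule.mem_map_of_mem hx
  rw [← subAct_eq_map, h] at this
  rwa [← glLinearEquiv_apply]

lemma no_equivariant :
    ¬ ∃ f : {W : Submodule (ZMod 2) V2 // Module.finrank (ZMod 2) W = 1} →
             {U : Submodule (ZMod 2) V2 // Module.finrank (ZMod 2) U = 2},
        ∀ (g : GL (Fin 3) (ZMod 2)) (W : _), f (fanoRep 1 g W) = fanoRep 2 g (f W) := by
  rintro ⟨f, hf⟩
  have he1ne : (![1,0,0] : V2) ≠ 0 := by decide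
  set W0 : {W : Submodule (ZMod 2) V2 // Module.finrank (ZMod 2) W = 1} :=
    ⟨Submodule.span (ZMod 2) {(![1,0,0] : V2)}, finrank_span_singleton he1ne⟩ with hW0
  set U : Submodule (ZMod 2) V2 := (f W0).1 with hU
  have invar : ∀ g : GL (Fin 3) (ZMod 2),
      (g : Matrix (Fin 3) (Fin 3) (ZMod 2)).mulVec ![1,0,0] = ![1,0,0] →
      subAct g U = U := by
    intro g hg
    have hfix : fanoRep 1 g W0 = W0 := by
      apply Subtype.ext
      exact fixes_point g hg
    have := hf g W0
    rw [hfix] at this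
    exact (congrArg Subtype.val this.symm)
  have hg : subAct gG U = U := invar gG (by decide)
  have hk : subAct kG U = U := invar kG (by decide)
  exact key U
    (by have := forward_closed gG U hg; simpa [gG] using this)
    (by have := forward_closed kG U hk; simpa [kG] using this)
    (f W0).2

/-- There is no `GL(3, 𝔽₂)`-equivariant map from the set `X` of 1-dimensional subspaces of
`𝔽₂³` (points of the Fano plane) to the set `Y` of 2-dimensional subspaces (lines of the
Fano plane); in particular, the two actions are not isomorphic as `G`-sets. -/
theorem fano_points_lines_no_equivariant_map :
    (¬ ∃ f : {W : Submodule (ZMod 2) V2 // Module.finrank (ZMod 2) W = 1} →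
             {U : Submodule (ZMod 2) V2 // Module.finrank (ZMod 2) U = 2},
        ∀ (g : GL (Fin 3) (ZMod 2)) (W : _), f (fanoRep 1 g W) = fanoRep 2 g (f W)) ∧
    (¬ ∃ f : {W : Submodule (ZMod 2) V2 // Module.finrank (ZMod 2) W = 1} →
             {U : Submodule (ZMod 2) V2 // Module.finrank (ZMod 2) U = 2},
        Function.Bijective f ∧
          ∀ (g : GL (Fin 3) (ZMod 2)) (W : _), f (fanoRep 1 g W) = fanoRep 2 g (f W)) := by
  refine ⟨no_equivariant, ?_⟩
  rintro ⟨f, _, hf⟩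
  exact no_equivariant ⟨f, hf⟩
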